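/- Let F be a form that is positive definite on T_n and let L be a finite set of normalized substitution matrices whose associated simplex subdivision sequence is convergent (maximal subsimplex diameter tends to 0). Then there exists m such that for every choice A_1, ..., A_m ∈ L, the form F(A_1 A_2 ··· A_m · t) has only nonnegative coefficients (i.e., the successive substitution sequence is positively terminating). -/

import Mathlib

open MvPolynomial

section Aux

variable {n : ℕ}

/-- column-stochastic predicate -/
def ColStoch (P : Matrix (Fin n) (Fin n) ℝ) : Prop :=
  ∀ j, (∀ i, 0 ≤ P i j) ∧ ∑ i, P i j = 1

lemma stoch_one : ColStoch (1 : Matrix (Fin n) (Fin n) ℝ) := by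
  intro j
  constructor
  · intro i
    by_cases h : i = j <;> simp [Matrix.one_apply, h]
  · simp [Matrix.one_apply]

lemma stoch_mul {P Q : Matrix (Fin n) (Fin n) ℝ} (hP : ColStoch P) (hQ : ColStoch Q) :
    ColStoch (P * Q) := by
  intro j
  constructor
  · intro i
    rw [Matrix.mul_apply]
    exact Finset.sum_nonneg fun k _ => mul_nonneg ((hP k).1 i) ((hQ j).1 k)
  · simp only [Matrix.mul_apply]
    rw [Finset.sum_comm]
    have : ∀ k : Fin n, ∑ i, P i k * Q k j = Q k j := by
      intro k
      rw [← Finset.sum_mul, (hP k).2, one_mul]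
    rw [Finset.sum_congr rfl fun k _ => this k]
    exact (hQ j).2

lemma stoch_list_prod : ∀ l : List (Matrix (Fin n) (Fin n) ℝ),
    (∀ A ∈ l, ColStoch A) → ColStoch l.prod := by
  intro l
  induction l with
  | nil => intro _; simpa using stoch_one
  | cons A l ih =>
    intro h
    rw [List.prod_cons]
    exact stoch_mul (h A List.mem_cons_self) (ih fun B hB => h B (List.mem_cons_of_mem _ hB))

/-- continuity of each coefficient of the substituted polynomial, as a function
of the substitution matrix (viewed as an element of the pi type). -/
lemma cont_coeff (F : MvPolynomial (Fin n) ℝ) :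
    ∀ α : Fin n →₀ ℕ, Continuous fun P : Fin n → Fin n → ℝ =>
      coeff α (aeval (fun i => ∑ j, C (P i j) * X j) F) := by
  induction F using MvPolynomial.induction_on with
  | C a =>
    intro α
    simp only [aeval_C]
    exact continuous_const
  | add p q hp hq =>
    intro α
    simp only [map_add, coeff_add]
    exact (hp α).add (hq α)
  | mul_X p i hp =>
    intro α
    have key : ∀ P : Fin n → Fin n → ℝ,
        coeff α (aeval (fun i' => ∑ j, C (P i' j) * X j) (p * X i)) =
        ∑ j, P i j * (if j ∈ α.support then
            coeff (α - Finsupp.single j 1) (aeval (fun i' => ∑ j, C (P i' j) * X j) p) else 0) := by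
      intro P
      rw [map_mul, aeval_X, Finset.mul_sum, coeff_sum]
      refine Finset.sum_congr rfl fun j _ => ?_
      have : aeval (fun i' => ∑ j, C (P i' j) * X j) p * (C (P i j) * X j) =
          C (P i j) * (aeval (fun i' => ∑ j, C (P i' j) * X j) p * X j) := by ring
      rw [this, coeff_C_mul, coeff_mul_X']
    simp only [key]
    apply continuous_finset_sum
    intro j _
    by_cases hj : j ∈ α.support
    · simp only [if_pos hj]
      exact (((continuous_apply j).comp (continuous_apply i) : Continuous fun P : Fin n → Fin n → ℝ => P i j)).mul (hp (α - Finsupp.single j 1))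
    · simp only [if_neg hj, mul_zero]
      exact continuous_const

/-- nonnegativity of coefficients of `(∑ X j) ^ d` -/
lemma coeff_sum_X_pow_nonneg (d : ℕ) (α : Fin n →₀ ℕ) :
    0 ≤ coeff α ((∑ j, X j : MvPolynomial (Fin n) ℝ) ^ d) := by
  induction d generalizing α with
  | zero =>
    simp only [pow_zero, coeff_one]
    split_ifs <;> norm_num
  | succ d ih =>
    rw [pow_succ, Finset.mul_sum, coeff_sum]
    refine Finset.sum_nonneg fun j _ => ?_
    rw [coeff_mul_X']
    split_ifs with h
    · exact ih _
    · exact le_rfl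

lemma coeff_sum_X_pow_pos (d : ℕ) (α : Fin n →₀ ℕ) (hα : α.degree = d) :
    0 < coeff α ((∑ j, X j : MvPolynomial (Fin n) ℝ) ^ d) := by
  induction d generalizing α with
  | zero =>
    rw [Finsupp.degree_eq_zero_iff] at hα
    subst hα
    simp
  | succ d ih =>
    obtain ⟨j, hj⟩ : ∃ j, j ∈ α.support := by
      by_contra h
      push_neg at h
      have : α = 0 := by
        ext i
        simpa using fun hne => (h i) (Finsupp.mem_support_iff.2 hne)
      rw [this, map_zero] at hα
      omega
    rw [pow_succ, Finset.mul_sum, coeff_sum]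
    have hterm : 0 < coeff α ((∑ j', X j' : MvPolynomial (Fin n) ℝ) ^ d * X j) := by
      rw [coeff_mul_X', if_pos hj]
      apply ih
      have hle : Finsupp.single j 1 ≤ α := by
        intro i
        by_cases h : i = j
        · subst h
          simpa [Finsupp.single_apply] using Nat.one_le_iff_ne_zero.2 (Finsupp.mem_support_iff.1 hj)
        · simp [Finsupp.single_apply, Ne.symm h]
      have hadd : (α - Finsupp.single j 1) + Finsupp.single j 1 = α :=
        tsub_add_cancel_of_le hle
      have hdeg : (α - Finsupp.single j 1).degree + (Finsupp.single j 1).degree = α.degree := by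
        simp only [Finsupp.degree_eq_weight_one]
        rw [← map_add, hadd]
      have hone : (Finsupp.single j (1:ℕ)).degree = 1 := by
        exact Finsupp.degree_single j 1
      omega
    refine Finset.sum_pos' (fun k _ => ?_) ⟨j, Finset.mem_univ j, hterm⟩
    rw [coeff_mul_X']
    split_ifs with h
    · exact coeff_sum_X_pow_nonneg d _
    · exact le_rfl

/-- substitution by a constant-column matrix gives `F(v) * (∑ X)^d` -/
lemma aeval_const_col {d : ℕ} (F : MvPolynomial (Fin n) ℝ) (hF : F.IsHomogeneous d)
    (v : Fin n → ℝ) :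
    aeval (fun i => ∑ j, C (v i) * X j) F =
      C (eval v F) * (∑ j, X j : MvPolynomial (Fin n) ℝ) ^ d := by
  have hg : ∀ i : Fin n, (∑ j, C (v i) * X j : MvPolynomial (Fin n) ℝ) =
      C (v i) * ∑ j, X j := by
    intro i; rw [Finset.mul_sum]
  conv_lhs => rw [F.as_sum]
  rw [map_sum, eval_eq, map_sum, Finset.sum_mul]
  refine Finset.sum_congr rfl fun β hβ => ?_
  have hdeg : β.degree = d := by
    by_contra h
    exact (Finsupp.mem_support_iff.1 hβ) (hF.coeff_eq_zero h)
  rw [aeval_monomial, Finsupp.prod]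
  simp only [hg]
  rw [Finset.prod_congr rfl (fun i (_ : i ∈ β.support) => (mul_pow (C (v i)) (∑ j, X j) (β i)))]
  rw [Finset.prod_mul_distrib, Finset.prod_pow_eq_pow_sum]
  have h1 : (∏ i ∈ β.support, (C (v i) : MvPolynomial (Fin n) ℝ) ^ β i) =
      C (∏ i ∈ β.support, v i ^ β i) := by
    rw [map_prod]
    refine Finset.prod_congr rfl fun i _ => ?_
    rw [map_pow]
  have h2 : ∑ i ∈ β.support, β i = d := hdeg
  rw [h1, h2, map_mul]
  have : (algebraMap ℝ (MvPolynomial (Fin n) ℝ)) (coeff β F) = C (coeff β F) := rfl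
  rw [this]
  ring

lemma key {d : ℕ} (hn : 0 < n) (F : MvPolynomial (Fin n) ℝ) (hF : F.IsHomogeneous d)
    (hpos : ∀ x : Fin n → ℝ, (∀ i, 0 ≤ x i) → ∑ i, x i = 1 → 0 < eval x F) :
    ∃ ε > (0:ℝ), ∀ P : Matrix (Fin n) (Fin n) ℝ, ColStoch P →
      (∀ j j' : Fin n, dist (fun i => P i j) (fun i => P i j') < ε) →
      ∀ α : Fin n →₀ ℕ, 0 ≤ coeff α (aeval (fun i => ∑ j, C (P i j) * X j) F) := by
  classical
  set T : Finset (Fin n →₀ ℕ) := Finset.finsuppAntidiag Finset.univ d with hT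
  have huniv : ∀ α : Fin n →₀ ℕ, ∑ i, α i = α.degree := fun α =>
    (Finset.sum_subset (Finset.subset_univ α.support)
      (fun x _ hx => Finsupp.notMem_support_iff.1 hx)).symm
  have hmemT : ∀ α : Fin n →₀ ℕ, α ∈ T ↔ α.degree = d := by
    intro α
    rw [hT, Finset.mem_finsuppAntidiag]
    constructor
    · rintro ⟨h1, -⟩
      rw [← huniv α]
      exact h1
    · intro h
      exact ⟨(huniv α).trans h, Finset.subset_univ _⟩
  set Dset : Set (Fin n → Fin n → ℝ) := (fun v : Fin n → ℝ => fun i _ => v i) '' stdSimplex ℝ (Fin n)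
    with hD
  have hDcomp : IsCompact Dset :=
    (isCompact_stdSimplex _ _).image (continuous_pi fun i => continuous_pi fun _ => continuous_apply i)
  set U : Set (Fin n → Fin n → ℝ) :=
    {P | ∀ α ∈ T, 0 < coeff α (aeval (fun i => ∑ j, C (P i j) * X j) F)} with hU
  have hUopen : IsOpen U := by
    have : U = ⋂ α ∈ T, {P : Fin n → Fin n → ℝ |
        0 < coeff α (aeval (fun i => ∑ j, C (P i j) * X j) F)} := by
      ext P
      simp [hU]
    rw [this]
    exact isOpen_biInter_finset fun α _ => isOpen_lt continuous_const (cont_coeff F α)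
  have hDU : Dset ⊆ U := by
    rintro _ ⟨v, hv, rfl⟩ α hα
    show 0 < coeff α (aeval (fun i => ∑ j, C (v i) * X j) F)
    rw [aeval_const_col F hF v, coeff_C_mul]
    exact mul_pos (hpos v hv.1 hv.2) (coeff_sum_X_pow_pos d α ((hmemT α).1 hα))
  obtain ⟨δ, hδ, hsub⟩ := hDcomp.exists_thickening_subset_open hUopen hDU
  refine ⟨δ, hδ, ?_⟩
  intro P hP hcol α
  have hv : (fun i => P i ⟨0, hn⟩) ∈ stdSimplex ℝ (Fin n) :=
    ⟨fun i => (hP ⟨0, hn⟩).1 i, (hP ⟨0, hn⟩).2⟩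
  have hPthick : (fun i j => P i j) ∈ Metric.thickening δ Dset := by
    refine Metric.mem_thickening_iff.mpr ⟨(fun i _ => P i ⟨0, hn⟩), ⟨_, hv, rfl⟩, ?_⟩
    rw [dist_pi_lt_iff hδ]
    intro i
    rw [dist_pi_lt_iff hδ]
    intro j
    calc dist (P i j) (P i ⟨0, hn⟩)
        ≤ dist (fun i => P i j) (fun i => P i ⟨0, hn⟩) := dist_le_pi_dist (fun i => P i j) (fun i => P i ⟨0, hn⟩) i
      _ < δ := hcol j ⟨0, hn⟩
  have hPU := hsub hPthick
  by_cases hα : α ∈ T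
  · exact le_of_lt (hPU α hα)
  · have hhom : (aeval (fun i => ∑ j, C (P i j) * X j) F).IsHomogeneous (1 * d) :=
      hF.aeval _ (fun i => IsHomogeneous.sum _ _ _ fun j _ => isHomogeneous_C_mul_X _ _)
    rw [one_mul] at hhom
    rw [hhom.coeff_eq_zero (fun h => hα ((hmemT α).2 h))]

end Aux

/-- If `F` is positive definite on the standard simplex and the subdivision sequence
associated with the finite set `L` of normalized substitution matrices is convergent
(column diameters of products tend to `0` uniformly), then there is an `m` such that
every `m`-fold successive substitution makes `F` trivially positive. -/
theorem stmt_11 {n d : ℕ} (hn : 0 < n) (F : MvPolynomial (Fin n) ℝ)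
    (hF : F.IsHomogeneous d)
    (hpos : ∀ x : Fin n → ℝ, (∀ i, 0 ≤ x i) → ∑ i, x i = 1 → 0 < eval x F)
    (L : Finset (Matrix (Fin n) (Fin n) ℝ))
    (hnorm : ∀ A ∈ L, ∀ j, (∀ i, 0 ≤ A i j) ∧ ∑ i, A i j = 1)
    (hconv : ∀ ε > (0 : ℝ), ∃ M, ∀ m ≥ M, ∀ A : Fin m → Matrix (Fin n) (Fin n) ℝ,
      (∀ i, A i ∈ L) → ∀ j j' : Fin n,
        dist (fun i => (List.ofFn A).prod i j) (fun i => (List.ofFn A).prod i j') < ε) :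
    ∃ m, ∀ A : Fin m → Matrix (Fin n) (Fin n) ℝ, (∀ i, A i ∈ L) →
      ∀ α : Fin n →₀ ℕ,
        0 ≤ coeff α (aeval (fun i => ∑ j, C ((List.ofFn A).prod i j) * X j) F) := by
  obtain ⟨ε, hε, hkey⟩ := key hn F hF hpos
  obtain ⟨M, hM⟩ := hconv ε hε
  refine ⟨M, fun A hA α => ?_⟩
  have hstoch : ColStoch (List.ofFn A).prod := by
    apply stoch_list_prod
    intro B hB
    rw [List.mem_ofFn] at hB
    obtain ⟨i, rfl⟩ := hB
    exact hnorm _ (hA i)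
  exact hkey _ hstoch (hM M le_rfl A hA) α
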